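/- Let X₁, …, Xₙ be independent random variables, each uniformly distributed on (0,1], let A ∈ ℝ^{n×n} be an invertible matrix, define (Y₁, …, Y_{n−1}, Z)ᵀ = A·(X₁, …, Xₙ)ᵀ, let g : ℝ^{n−1} → ℝ be a measurable function, and let ε > 0. Then the probability that Z ∈ [g(Y₁,…,Y_{n−1}), g(Y₁,…,Y_{n−1}) + ε] is at most 2ε · ‖A⁻¹eₙ‖₁, where ‖·‖₁ is the ℓ₁-norm and eₙ is the n-th standard basis vector of ℝⁿ. -/

import Mathlib

open scoped RealInnerProductSpace BigOperators
open MeasureTheory ProbabilityTheory Matrix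

noncomputable section

/-- Identity map from plain vectors to Euclidean space (L2 norm). -/
def toE {n : ℕ} (x : Fin n → ℝ) : EuclideanSpace ℝ (Fin n) := WithLp.toLp 2 x

/-- Identity map from Euclidean space to plain vectors. -/
def ofE {n : ℕ} (x : EuclideanSpace ℝ (Fin n)) : Fin n → ℝ := WithLp.ofLp x

/-- Normalization N(x) = x / ‖x‖. -/
def nrm {n : ℕ} (x : EuclideanSpace ℝ (Fin n)) : EuclideanSpace ℝ (Fin n) := ‖x‖⁻¹ • x

/-- δ̂(S, v): the norm of the projection of v onto the orthogonal complement of span S,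
divided by ‖v‖ (the sine of the angle between v and span S). -/
def deltaHat {n : ℕ} (S : Set (EuclideanSpace ℝ (Fin n))) (v : EuclideanSpace ℝ (Fin n)) : ℝ :=
  ‖(Submodule.orthogonalProjectionOnto ((Submodule.span ℝ S)ᗮ) v : EuclideanSpace ℝ (Fin n))‖ / ‖v‖

/-- δ(z₁, …, zₙ) = min over k of δ̂({z_i : i ≠ k}, z_k). -/
def deltaVec {n : ℕ} (z : Fin n → EuclideanSpace ℝ (Fin n)) : ℝ :=
  ⨅ k : Fin n, deltaHat (z '' {i | i ≠ k}) (z k)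

/-- δ(A) for rows a₁, …, a_m: the minimum of δ over all choices of n linearly
independent rows. -/
def deltaRows {m n : ℕ} (a : Fin m → EuclideanSpace ℝ (Fin n)) : ℝ :=
  sInf { d | ∃ f : Fin n → Fin m, LinearIndependent ℝ (a ∘ f) ∧ d = deltaVec (a ∘ f) }

/-- A vertex of the polyhedron {x : ∀ i, ⟪a i, x⟫ ≤ b i}. -/
def IsVertex {m n : ℕ} (a : Fin m → EuclideanSpace ℝ (Fin n)) (b : Fin m → ℝ)
    (z : EuclideanSpace ℝ (Fin n)) : Prop :=
  (∀ i, ⟪a i, z⟫ ≤ b i) ∧ Submodule.span ℝ (a '' {i | ⟪a i, z⟫ = b i}) = ⊤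

/-- Two distinct vertices are neighboring if n−1 linearly independent constraints are
tight at both. -/
def Neighboring {m n : ℕ} (a : Fin m → EuclideanSpace ℝ (Fin n)) (b : Fin m → ℝ)
    (z₁ z₂ : EuclideanSpace ℝ (Fin n)) : Prop :=
  IsVertex a b z₁ ∧ IsVertex a b z₂ ∧ z₁ ≠ z₂ ∧
    ∃ s : Finset (Fin m), s.card = n - 1 ∧
      LinearIndependent ℝ (fun i : s => a i) ∧
      ∀ i ∈ s, ⟪a i, z₁⟫ = b i ∧ ⟪a i, z₂⟫ = b i

/-- The largest absolute value of a sub-determinant of size k. -/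
def subdetSup {m n : ℕ} (A : Matrix (Fin m) (Fin n) ℝ) (k : ℕ) : ℝ :=
  ⨆ (f : Fin k → Fin m) (_ : Function.Injective f) (g : Fin k → Fin n)
    (_ : Function.Injective g), |(A.submatrix f g).det|

end


open scoped ENNReal

lemma aux1 (a : ℝ) : volume (Set.Ioc a (1+a) \ Set.Ioc 0 1) ≤ ENNReal.ofReal |a| := by
  have hsub : Set.Ioc a (1+a) \ Set.Ioc 0 1 ⊆ Set.Ioc a 0 ∪ Set.Ioc 1 (1+a) := by
    rintro t ⟨⟨h1, h2⟩, h3⟩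
    simp only [Set.mem_Ioc, not_and, not_le] at h3
    rcases le_or_gt t 0 with h | h
    · exact Or.inl ⟨h1, h⟩
    · exact Or.inr ⟨h3 h, h2⟩
  refine le_trans (le_trans (measure_mono hsub) (measure_union_le _ _)) ?_
  rw [Real.volume_Ioc, Real.volume_Ioc]
  have h2 : (1 + a - 1) = a := by ring
  have h1 : (0 - a) = -a := by ring
  rw [h1, h2]
  rcases le_or_gt 0 a with h | h
  · simp [ENNReal.ofReal_eq_zero.2 (by linarith : -a ≤ 0), abs_of_nonneg h]
  · simp [ENNReal.ofReal_eq_zero.2 (le_of_lt h), abs_of_neg h]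

lemma key_vol {d : ℕ} (c : Fin d → ℝ) (h : (Fin d → ℝ) → ℝ)
    (hh : Measurable h) (hshift : ∀ x s, h (x + s • c) = h x + s)
    (ε : ℝ) (hε : 0 < ε) :
    volume {x : Fin d → ℝ | x ∈ Set.pi Set.univ (fun _ => Set.Ioc (0:ℝ) 1) ∧ h x ∈ Set.Icc 0 ε}
      ≤ ENNReal.ofReal (2 * ε * ∑ i, |c i|) := by
  set box : Set (Fin d → ℝ) := Set.pi Set.univ (fun _ => Set.Ioc (0:ℝ) 1) with hbox
  set E : Set (Fin d → ℝ) := {x | x ∈ box ∧ h x ∈ Set.Icc 0 ε} with hE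
  have hboxm : MeasurableSet box := MeasurableSet.univ_pi fun _ => measurableSet_Ioc
  have hEm : MeasurableSet E := by
    have : E = box ∩ h ⁻¹' Set.Icc 0 ε := rfl
    rw [this]; exact hboxm.inter (hh measurableSet_Icc)
  have hboxvol : volume box = 1 := by rw [hbox, volume_pi_pi]; simp [Real.volume_Ioc]
  -- translations
  set w : ℕ → (Fin d → ℝ) := fun j => (2 * ε * j) • c with hw
  have htrm : ∀ v : Fin d → ℝ, Measurable fun y : Fin d → ℝ => y - v :=
    fun v => (continuous_id.sub continuous_const).measurable
  have htrv : ∀ (v : Fin d → ℝ) (s : Set (Fin d → ℝ)),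
      volume ((fun y => y - v) ⁻¹' s) = volume s := by
    intro v s
    have : (fun y : Fin d → ℝ => y - v) = fun y => y + (-v) := funext fun y => sub_eq_add_neg y v
    rw [this, measure_preimage_add_right]
  set Ej : ℕ → Set (Fin d → ℝ) := fun j => (fun y => y - w j) ⁻¹' E with hEj
  set Bj : ℕ → Set (Fin d → ℝ) := fun j => (fun y => y - w j) ⁻¹' box with hBj
  have hEsub : ∀ j, Ej j ⊆ Bj j := fun j y hy => hy.1
  have hEjm : ∀ j, MeasurableSet (Ej j) := fun j => (htrm (w j)) hEm
  have hhEj : ∀ j y, y ∈ Ej j → h y ∈ Set.Icc (2*ε*j) (2*ε*j + ε) := by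
    intro j y hy
    have hy2 := hy.2
    have hyeq : (y - w j) + (2*ε*(j:ℝ)) • c = y := by
      show y - (2*ε*(j:ℝ)) • c + (2*ε*(j:ℝ)) • c = y
      simp
    have hhy : h y = h (y - w j) + 2*ε*(j:ℝ) := by
      conv_lhs => rw [← hyeq]
      rw [hshift]
    rw [hhy]
    rcases hy2 with ⟨h1, h2⟩
    constructor <;> linarith
  have hdisj : ∀ K : ℕ, Set.PairwiseDisjoint ↑(Finset.range K) Ej := by
    intro K i _ j _ hij
    rw [Function.onFun, Set.disjoint_left]
    intro y hyi hyj
    have h1 := hhEj i y hyi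
    have h2 := hhEj j y hyj
    rcases lt_or_gt_of_ne hij with hlt | hlt
    · have : (i:ℝ) + 1 ≤ j := by exact_mod_cast hlt
      rcases h1 with ⟨_, hb⟩; rcases h2 with ⟨ha, _⟩; nlinarith
    · have : (j:ℝ) + 1 ≤ i := by exact_mod_cast hlt
      rcases h1 with ⟨ha, _⟩; rcases h2 with ⟨_, hb⟩; nlinarith
  -- difference bound
  set D : ℝ≥0∞ := ENNReal.ofReal (2 * ε * ∑ i, |c i|) with hD
  have hB0 : Bj 0 = box := by
    have : w 0 = 0 := by rw [hw]; simp
    rw [hBj]; simp [this]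
  have hdiffbound : ∀ j : ℕ, volume (Bj (j+1) \ Bj j) ≤ D := by
    intro j
    have hstep : Bj (j+1) \ Bj j = (fun y => y - w j) ⁻¹' (Bj 1 \ Bj 0) := by
      have hws : ∀ y : Fin d → ℝ, y - w (j+1) = (y - w j) - w 1 := by
        intro y
        have : w (j+1) = w j + w 1 := by
          ext i
          simp only [hw, Pi.smul_apply, smul_eq_mul, Pi.add_apply]
          push_cast; ring
        rw [this, sub_add_eq_sub_sub]
      have hw0 : w 0 = 0 := by ext i; simp [hw]
      ext y
      constructor
      · rintro ⟨h1, h2⟩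
        refine ⟨show (y - w j) - w 1 ∈ box by rw [← hws]; exact h1, ?_⟩
        intro hmem
        have hmem' : (y - w j) - w 0 ∈ box := hmem
        rw [hw0, sub_zero] at hmem'
        exact h2 hmem'
      · rintro ⟨h1, h2⟩
        refine ⟨show y - w (j+1) ∈ box by rw [hws]; exact h1, ?_⟩
        intro hyj
        refine h2 ?_
        show (y - w j) - w 0 ∈ box
        rw [hw0, sub_zero]
        exact hyj
    rw [hstep, htrv]
    -- bound volume (Bj 1 \ Bj 0)
    set v : Fin d → ℝ := w 1 with hv
    have hv1 : ∀ i, v i = 2 * ε * c i := by intro i; rw [hv, hw]; simp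
    set S : Fin d → Set (Fin d → ℝ) := fun i =>
      Set.pi Set.univ (fun j => if j = i then Set.Ioc (v j) (1 + v j) \ Set.Ioc 0 1
        else Set.Ioc (v j) (1 + v j)) with hS
    have hincl : Bj 1 \ Bj 0 ⊆ ⋃ i, S i := by
      rintro y ⟨hy1, hy0⟩
      have hy1' : ∀ j, y j - v j ∈ Set.Ioc (0:ℝ) 1 := by
        intro j
        exact hy1 j (Set.mem_univ j)
      rw [hB0] at hy0
      have hy0' : ¬ ∀ i, y i ∈ Set.Ioc (0:ℝ) 1 := fun hall => hy0 (fun i _ => hall i)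
      push_neg at hy0'
      obtain ⟨i, hi⟩ := hy0'
      refine Set.mem_iUnion.2 ⟨i, ?_⟩
      intro j _
      rcases hy1' j with ⟨ha, hb⟩
      by_cases hji : j = i
      · simp only [hji, if_pos rfl]
        subst hji
        exact ⟨⟨by linarith, by linarith⟩, hi⟩
      · simp only [if_neg hji]
        exact ⟨by linarith, by linarith⟩
    refine le_trans (measure_mono hincl) (le_trans (measure_iUnion_le S) ?_)
    rw [tsum_fintype]
    have hSi : ∀ i, volume (S i) ≤ ENNReal.ofReal (2 * ε * |c i|) := by
      intro i
      rw [hS]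
      rw [volume_pi_pi]
      have hprod : ∏ j, volume (if j = i then Set.Ioc (v j) (1 + v j) \ Set.Ioc 0 1
          else Set.Ioc (v j) (1 + v j)) = volume (Set.Ioc (v i) (1 + v i) \ Set.Ioc 0 1) := by
        refine Finset.prod_eq_single_of_mem i (Finset.mem_univ i) ?_ |>.trans (by rw [if_pos rfl])
        intro j _ hj
        rw [if_neg hj, Real.volume_Ioc]
        simp
      rw [hprod]
      refine le_trans (aux1 (v i)) ?_
      rw [hv1 i, abs_mul, abs_of_pos (by linarith : (0:ℝ) < 2*ε)]
    refine le_trans (Finset.sum_le_sum fun i _ => hSi i) ?_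
    rw [← ENNReal.ofReal_sum_of_nonneg (fun i _ => by positivity)]
    rw [hD, Finset.mul_sum]
  -- main estimate for each K
  have hmain : ∀ K : ℕ, (K : ℝ≥0∞) * volume E ≤ 1 + (K : ℝ≥0∞) * D := by
    intro K
    have hsum : (K : ℝ≥0∞) * volume E = ∑ j ∈ Finset.range K, volume (Ej j) := by
      have : ∀ j, volume (Ej j) = volume E := fun j => htrv (w j) E
      simp [this, Finset.sum_const, mul_comm]
    have hunion : ∑ j ∈ Finset.range K, volume (Ej j)
        = volume (⋃ j ∈ Finset.range K, Ej j) :=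
      (measure_biUnion_finset (hdisj K) (fun j _ => hEjm j)).symm
    have hsubB : (⋃ j ∈ Finset.range K, Ej j) ⊆
        Bj 0 ∪ ⋃ j ∈ Finset.range K, (Bj (j+1) \ Bj j) := by
      have step : ∀ j, j ≤ K → Bj j ⊆ Bj 0 ∪ ⋃ i ∈ Finset.range K, (Bj (i+1) \ Bj i) := by
        intro j
        induction j with
        | zero => exact fun _ => Set.subset_union_left
        | succ j ih =>
          intro hj y hy
          by_cases hyj : y ∈ Bj j
          · exact ih (Nat.le_of_succ_le hj) hyj
          · exact Or.inr (Set.mem_biUnion (Finset.mem_range.2 (Nat.lt_of_succ_le hj)) ⟨hy, hyj⟩)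
      refine Set.iUnion₂_subset fun j hj => (hEsub j).trans ?_
      exact step j (le_of_lt (Finset.mem_range.1 hj))
    calc (K : ℝ≥0∞) * volume E = volume (⋃ j ∈ Finset.range K, Ej j) := by rw [hsum, hunion]
      _ ≤ volume (Bj 0 ∪ ⋃ j ∈ Finset.range K, (Bj (j+1) \ Bj j)) := measure_mono hsubB
      _ ≤ volume (Bj 0) + volume (⋃ j ∈ Finset.range K, (Bj (j+1) \ Bj j)) :=
          measure_union_le _ _
      _ ≤ 1 + ∑ j ∈ Finset.range K, volume (Bj (j+1) \ Bj j) := by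
          rw [hB0, hboxvol]
          exact add_le_add (le_refl 1) (measure_biUnion_finset_le _ _)
      _ ≤ 1 + ∑ _j ∈ Finset.range K, D := by
          exact add_le_add (le_refl 1) (Finset.sum_le_sum fun j _ => hdiffbound j)
      _ = 1 + (K : ℝ≥0∞) * D := by simp [Finset.sum_const, mul_comm]
  -- conclude
  have hEfin : volume E ≤ 1 := by
    refine le_trans (measure_mono ?_) (le_of_eq hboxvol)
    exact fun y hy => hy.1
  have hEne : volume E ≠ ⊤ := by
    exact ne_top_of_le_ne_top ENNReal.one_ne_top hEfin
  set Dr : ℝ := 2 * ε * ∑ i, |c i| with hDr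
  have hDrnn : 0 ≤ Dr := by positivity
  have hreal : ∀ K : ℕ, (K : ℝ) * (volume E).toReal ≤ 1 + K * Dr := by
    intro K
    have h1 := hmain K
    have hrhs : (1 + (K : ℝ≥0∞) * D) ≠ ⊤ := by
      rw [hD]
      exact ENNReal.add_ne_top.2 ⟨ENNReal.one_ne_top,
        ENNReal.mul_ne_top (ENNReal.natCast_ne_top K) ENNReal.ofReal_ne_top⟩
    have := ENNReal.toReal_mono hrhs h1
    rw [ENNReal.toReal_mul, ENNReal.toReal_natCast] at this
    rw [ENNReal.toReal_add ENNReal.one_ne_top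
        (ENNReal.mul_ne_top (ENNReal.natCast_ne_top K) ENNReal.ofReal_ne_top),
      ENNReal.toReal_mul, ENNReal.toReal_natCast, ENNReal.toReal_one,
      ENNReal.toReal_ofReal hDrnn] at this
    exact this
  have hfinal : (volume E).toReal ≤ Dr := by
    refine le_of_forall_pos_le_add ?_
    intro δ hδ
    obtain ⟨K, hK⟩ := exists_nat_gt (1 / δ)
    have hK0 : (0:ℝ) < K := lt_trans (by positivity) hK
    have h1K : 1 / (K:ℝ) < δ := by
      rw [div_lt_iff₀ hK0]
      rw [div_lt_iff₀ hδ] at hK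
      linarith [mul_comm δ (K:ℝ)]
    have := hreal K
    have hv : (volume E).toReal ≤ 1 / K + Dr := by
      rw [div_add' _ _ _ (ne_of_gt hK0), le_div_iff₀ hK0]
      nlinarith
    linarith
  calc volume E = ENNReal.ofReal (volume E).toReal := (ENNReal.ofReal_toReal hEne).symm
    _ ≤ ENNReal.ofReal Dr := ENNReal.ofReal_le_ofReal hfinal

/-- Let X₁, …, X_{n+1} be independent random variables uniform on (0,1],
let A ∈ ℝ^{(n+1)×(n+1)} be invertible, let (Y₁, …, Yₙ, Z)ᵀ = A·(X₁, …, X_{n+1})ᵀ,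
let g be measurable and ε > 0. Then
P[Z ∈ [g(Y), g(Y)+ε]] ≤ 2ε · ‖A⁻¹e_{n+1}‖₁. -/
theorem stmt9 {n : ℕ} {Ω : Type*} [MeasurableSpace Ω] (μ : Measure Ω)
    [IsProbabilityMeasure μ]
    (X : Fin (n+1) → Ω → ℝ) (hXmeas : ∀ i, Measurable (X i))
    (hXindep : iIndepFun X μ)
    (hXlaw : ∀ i, μ.map (X i) = volume.restrict (Set.Ioc (0:ℝ) 1))
    (A : Matrix (Fin (n+1)) (Fin (n+1)) ℝ) (hA : IsUnit A.det)
    (g : (Fin n → ℝ) → ℝ) (hg : Measurable g) (ε : ℝ) (hε : 0 < ε) :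
    μ {ω | A.mulVec (fun i => X i ω) (Fin.last n) ∈
        Set.Icc (g fun j => A.mulVec (fun i => X i ω) j.castSucc)
          (g (fun j => A.mulVec (fun i => X i ω) j.castSucc) + ε)} ≤
      ENNReal.ofReal (2 * ε * ∑ k, |A⁻¹.mulVec (Pi.single (Fin.last n) 1) k|) := by
  classical
  have hprob : IsProbabilityMeasure (volume.restrict (Set.Ioc (0:ℝ) 1)) :=
    ⟨by simp [Real.volume_Ioc]⟩
  set T : Ω → (Fin (n+1) → ℝ) := fun ω i => X i ω with hTdef
  have hTmeas : Measurable T := measurable_pi_lambda _ hXmeas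
  have hmap : μ.map T
      = Measure.pi (fun _ : Fin (n+1) => volume.restrict (Set.Ioc (0:ℝ) 1)) := by
    refine (Measure.pi_eq ?_).symm
    intro s hs
    rw [Measure.map_apply hTmeas (MeasurableSet.univ_pi hs)]
    have hpre : T ⁻¹' Set.pi Set.univ s = ⋂ i ∈ Finset.univ, X i ⁻¹' s i := by
      ext ω
      simp [hTdef, Set.mem_pi]
    rw [hpre]
    rw [(ProbabilityTheory.iIndepFun_iff_measure_inter_preimage_eq_mul.mp hXindep)
      Finset.univ (fun i _ => hs i)]
    refine Finset.prod_congr rfl fun i _ => ?_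
    rw [← hXlaw i, Measure.map_apply (hXmeas i) (hs i)]
  set box : Set (Fin (n+1) → ℝ) := Set.pi Set.univ (fun _ => Set.Ioc (0:ℝ) 1) with hboxdef
  have hres : Measure.pi (fun _ : Fin (n+1) => volume.restrict (Set.Ioc (0:ℝ) 1))
      = volume.restrict box := by
    refine Measure.pi_eq ?_
    intro s hs
    rw [Measure.restrict_apply (MeasurableSet.univ_pi hs)]
    have hinter : Set.pi Set.univ s ∩ box
        = Set.pi Set.univ (fun i => s i ∩ Set.Ioc (0:ℝ) 1) := by
      ext x
      simp only [hboxdef, Set.mem_inter_iff, Set.mem_pi, Set.mem_univ, forall_true_left]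
      constructor
      · rintro ⟨h1, h2⟩ i; exact ⟨h1 i, h2 i⟩
      · intro h1; exact ⟨fun i => (h1 i).1, fun i => (h1 i).2⟩
    rw [hinter, volume_pi_pi]
    exact Finset.prod_congr rfl fun i _ => (Measure.restrict_apply (hs i)).symm
  set c : Fin (n+1) → ℝ := A⁻¹.mulVec (Pi.single (Fin.last n) 1) with hcdef
  have hAc : A.mulVec c = Pi.single (Fin.last n) 1 := by
    rw [hcdef, Matrix.mulVec_mulVec, Matrix.mul_nonsing_inv A hA, Matrix.one_mulVec]
  have hmv : ∀ i, Measurable fun x : Fin (n+1) → ℝ => A.mulVec x i := by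
    intro i
    have : (fun x : Fin (n+1) → ℝ => A.mulVec x i) = fun x => ∑ j, A i j * x j := by
      funext x
      simp [Matrix.mulVec, dotProduct]
    rw [this]
    exact Finset.measurable_sum _ fun j _ => by fun_prop
  set F : (Fin (n+1) → ℝ) → ℝ := fun x => A.mulVec x (Fin.last n) with hFdef
  set G : (Fin (n+1) → ℝ) → ℝ := fun x => g (fun j => A.mulVec x j.castSucc) with hGdef
  have hF : Measurable F := hmv (Fin.last n)
  have hG : Measurable G :=
    hg.comp (measurable_pi_lambda _ fun j => hmv j.castSucc)
  set h0 : (Fin (n+1) → ℝ) → ℝ := fun x => F x - G x with h0def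
  have hh0 : Measurable h0 := hF.sub hG
  have hmvadd : ∀ (x : Fin (n+1) → ℝ) (s : ℝ) i,
      A.mulVec (x + s • c) i = A.mulVec x i + s * (Pi.single (Fin.last n) (1:ℝ) : Fin (n+1) → ℝ) i := by
    intro x s i
    rw [Matrix.mulVec_add, Matrix.mulVec_smul, hAc]
    simp
  have hshift : ∀ (x : Fin (n+1) → ℝ) (s : ℝ), h0 (x + s • c) = h0 x + s := by
    intro x s
    have hF' : F (x + s • c) = F x + s := by
      show A.mulVec (x + s • c) (Fin.last n) = A.mulVec x (Fin.last n) + s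
      rw [hmvadd]
      simp
    have hG' : G (x + s • c) = G x := by
      show g (fun j => A.mulVec (x + s • c) j.castSucc)
        = g (fun j => A.mulVec x j.castSucc)
      congr 1
      funext j
      rw [hmvadd, Pi.single_eq_of_ne (Fin.castSucc_lt_last j).ne]
      ring
    show F (x + s • c) - G (x + s • c) = (F x - G x) + s
    rw [hF', hG']
    ring
  set Ev : Set (Fin (n+1) → ℝ) := {x | G x ≤ F x ∧ F x ≤ G x + ε} with hEvdef
  have hEvm : MeasurableSet Ev :=
    (measurableSet_le hG hF).inter (measurableSet_le hF (hG.add_const ε))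
  have h1 : μ {ω | A.mulVec (fun i => X i ω) (Fin.last n) ∈
        Set.Icc (g fun j => A.mulVec (fun i => X i ω) j.castSucc)
          (g (fun j => A.mulVec (fun i => X i ω) j.castSucc) + ε)}
      = μ.map T Ev := by
    rw [Measure.map_apply hTmeas hEvm]
    rfl
  rw [h1, hmap, hres, Measure.restrict_apply hEvm]
  have h2 : Ev ∩ box = {x | x ∈ box ∧ h0 x ∈ Set.Icc 0 ε} := by
    ext x
    simp only [hEvdef, h0def, Set.mem_inter_iff, Set.mem_setOf_eq, Set.mem_Icc]
    constructor
    · rintro ⟨⟨ha, hb⟩, hx⟩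
      exact ⟨hx, by linarith, by linarith⟩
    · rintro ⟨hx, ha, hb⟩
      exact ⟨⟨by linarith, by linarith⟩, hx⟩
  rw [h2]
  exact key_vol c h0 hh0 hshift ε hε
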